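/- arXiv:2506.17841 — 3 statements merged into one kernel-verified Lean document; each statement's English description precedes it below -/
import Mathlib

section
/- Under the hypotheses above (λ > 0, α ≥ 0, ‖g(t)‖ ≤ C, sF(s) ≤ -αs²), set R² := 1 + C²/(λ(λ+2α)). For every r > R there exists L(r) := (1/(λ+2α))·ln(r² - R² + 1) such that every solution v with ‖v(0)‖ ≤ r satisfies ‖v(t)‖ ≤ R for all t ≥ L(r). Hence the closed ball B[0, R] is an absorbing set. -/
open Real

/-- The closed ball B[0, R] with R² = 1 + C²/(λ(λ+2α)) is an absorbing set:
any solution starting with ‖v(0)‖ ≤ r enters it after time L(r) = (λ+2α)⁻¹ ln(r²-R²+1). -/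
theorem absorbing_ball (lam α C : ℝ)
    (hlam : 0 < lam) (hα : 0 ≤ α) (hC : 0 ≤ C)
    (v : ℝ → lp (fun _ : ℤ => ℝ) 2) (Ed : ℝ → ℝ)
    (hE : ∀ t ≥ (0 : ℝ), HasDerivAt (fun s => ‖v s‖ ^ 2) (Ed t) t)
    (hE' : ∀ t ≥ (0 : ℝ), Ed t ≤ -(lam + 2 * α) * ‖v t‖ ^ 2 + C ^ 2 / lam) :
    ∀ r : ℝ, r > Real.sqrt (1 + C ^ 2 / (lam * (lam + 2 * α))) → ‖v 0‖ ≤ r →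
      ∀ t ≥ (1 / (lam + 2 * α)) * Real.log (r ^ 2 - (1 + C ^ 2 / (lam * (lam + 2 * α))) + 1),
        ‖v t‖ ≤ Real.sqrt (1 + C ^ 2 / (lam * (lam + 2 * α))) := by
  intro r hr hr0 t ht
  set β : ℝ := lam + 2 * α with hβdef
  have hβ : 0 < β := by dsimp [β]; linarith
  set K : ℝ := C ^ 2 / lam with hKdef
  have hK0 : 0 ≤ K := by positivity
  set R2 : ℝ := 1 + C ^ 2 / (lam * β) with hR2def
  have hR2' : R2 = 1 + K / β := by rw [hR2def, hKdef, div_div]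
  have hR2pos : 0 < R2 := by positivity
  have hsq : Real.sqrt R2 ^ 2 = R2 := Real.sq_sqrt hR2pos.le
  have hrpos : 0 ≤ r := le_trans (Real.sqrt_nonneg _) hr.le
  have hr2 : R2 < r ^ 2 := by
    have := pow_lt_pow_left₀ hr (Real.sqrt_nonneg _) (two_ne_zero)
    rwa [hsq] at this
  set D : ℝ := r ^ 2 - R2 + 1 with hDdef
  have hD1 : 1 ≤ D := by dsimp [D]; linarith
  have hDpos : 0 < D := by linarith
  -- the auxiliary function
  set f : ℝ → ℝ := fun s => (‖v s‖ ^ 2 - K / β) * Real.exp (β * s) with hfdef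
  have hderiv : ∀ s : ℝ, 0 ≤ s →
      HasDerivAt f (Ed s * Real.exp (β * s)
        + (‖v s‖ ^ 2 - K / β) * (Real.exp (β * s) * β)) s := by
    intro s hs
    have h1 : HasDerivAt (fun u => ‖v u‖ ^ 2 - K / β) (Ed s) s := (hE s hs).sub_const _
    have h2 : HasDerivAt (fun u : ℝ => Real.exp (β * u)) (Real.exp (β * s) * β) s := by
      simpa using ((hasDerivAt_id s).const_mul β).exp
    exact h1.mul h2
  have hanti : AntitoneOn f (Set.Ici (0 : ℝ)) := by
    apply antitoneOn_of_deriv_nonpos (convex_Ici 0)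
    · intro s hs
      exact ((hderiv s hs).continuousAt).continuousWithinAt
    · intro s hs
      rw [interior_Ici] at hs
      exact (hderiv s (le_of_lt hs)).differentiableAt.differentiableWithinAt
    · intro s hs
      rw [interior_Ici] at hs
      rw [(hderiv s hs.le).deriv]
      have h3 := hE' s hs.le
      have hexp : 0 < Real.exp (β * s) := Real.exp_pos _
      have : Ed s + (‖v s‖ ^ 2 - K / β) * β ≤ 0 := by
        rw [hKdef] at *
        have : β * ((C^2/lam) / β) = C^2/lam := mul_div_cancel₀ _ hβ.ne'
        nlinarith
      nlinarith
  have ht0 : (0:ℝ) ≤ (1 / β) * Real.log D := by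
    apply mul_nonneg (by positivity)
    exact Real.log_nonneg hD1
  have htnn : 0 ≤ t := le_trans ht0 ht
  have hf0 : f 0 = ‖v 0‖ ^ 2 - K / β := by simp [hfdef]
  have hft : f t ≤ f 0 := hanti (Set.self_mem_Ici) (Set.mem_Ici.2 htnn) htnn
  have hfD : f t ≤ D := by
    rw [hf0] at hft
    have : ‖v 0‖ ^ 2 ≤ r ^ 2 := pow_le_pow_left₀ (norm_nonneg _) hr0 2
    have hKβ : K / β = R2 - 1 := by rw [hR2']; ring
    calc f t ≤ ‖v 0‖ ^ 2 - K / β := hft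
      _ ≤ r ^ 2 - (R2 - 1) := by rw [hKβ] at *; linarith
      _ = D := by rw [hDdef]; ring
  -- exp(β t) ≥ D
  have hexpD : D ≤ Real.exp (β * t) := by
    have : Real.log D ≤ β * t := by
      have := (mul_le_mul_iff_right₀ hβ).2 ht
      rw [← mul_assoc, mul_one_div, div_self hβ.ne', one_mul] at this
      linarith
    calc D = Real.exp (Real.log D) := (Real.exp_log hDpos).symm
      _ ≤ Real.exp (β * t) := Real.exp_le_exp.2 this
  -- conclude ‖v t‖² ≤ R2
  have hE2 : ‖v t‖ ^ 2 ≤ R2 := by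
    have hexp : 0 < Real.exp (β * t) := Real.exp_pos _
    have h1 : (‖v t‖ ^ 2 - K / β) * Real.exp (β * t) ≤ D := hfD
    have h2 : ‖v t‖ ^ 2 - K / β ≤ 1 := by
      have h3 : (‖v t‖ ^ 2 - K / β) * Real.exp (β * t) ≤ 1 * Real.exp (β * t) := by
        rw [one_mul]; linarith
      exact le_of_mul_le_mul_right h3 hexp
    rw [hR2']; linarith
  calc ‖v t‖ = Real.sqrt (‖v t‖ ^ 2) := by rw [Real.sqrt_sq (norm_nonneg _)]
    _ ≤ Real.sqrt R2 := Real.sqrt_le_sqrt hE2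
end

section
/- Let ξ : [0,∞) → [0,1] be a C¹ cutoff function with ξ(s) = 0 for 0 ≤ s ≤ 1, ξ(s) = 1 for s ≥ 2, and |ξ'(s)| ≤ C₀ for all s ≥ 0. For k ∈ ℕ, k ≥ 1, set ξ_k(s) := ξ(s/k), and for u ∈ ℓ²(ℤ, ℝ) define v ∈ ℓ² by vᵢ = ξ_k(|i|)uᵢ. Then ⟨D⁺u, D⁺v⟩ ≥ -4C₀‖u‖²/k. -/
set_option maxHeartbeats 1000000 in
/-- Cutoff estimate: ⟨D⁺u, D⁺v⟩ ≥ -4C₀‖u‖²/k for v defined by vᵢ = ξ(|i|/k)uᵢ. -/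
theorem cutoff_gradient_estimate (ξ ξd : ℝ → ℝ) (C₀ : ℝ)
    (hrange : ∀ s ≥ (0 : ℝ), ξ s ∈ Set.Icc (0 : ℝ) 1)
    (h01 : ∀ s ∈ Set.Icc (0 : ℝ) 1, ξ s = 0)
    (h2 : ∀ s ≥ (2 : ℝ), ξ s = 1)
    (hderiv : ∀ s ≥ (0 : ℝ), HasDerivAt ξ (ξd s) s)
    (hbound : ∀ s ≥ (0 : ℝ), |ξd s| ≤ C₀)
    (k : ℕ) (hk : 1 ≤ k) (u : lp (fun _ : ℤ => ℝ) 2) :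
    ∑' i : ℤ, (u (i + 1) - u i) *
        (ξ (((|i + 1| : ℤ) : ℝ) / k) * u (i + 1) - ξ (((|i| : ℤ) : ℝ) / k) * u i)
      ≥ -(4 * C₀ * ‖u‖ ^ 2) / k := by
  have hC0 : 0 ≤ C₀ := le_trans (abs_nonneg _) (hbound 0 le_rfl)
  have hk0 : (0:ℝ) < k := by exact_mod_cast Nat.lt_of_lt_of_le Nat.zero_lt_one hk
  -- Lipschitz estimate on [0, ∞)
  have hlip : ∀ a b : ℝ, 0 ≤ a → 0 ≤ b → |ξ a - ξ b| ≤ C₀ * |a - b| := by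
    intro a b ha hb
    have := Convex.norm_image_sub_le_of_norm_hasDerivWithin_le
      (f := ξ) (f' := ξd) (s := Set.Ici (0:ℝ))
      (fun x hx => (hderiv x hx).hasDerivWithinAt)
      (fun x hx => by simpa [Real.norm_eq_abs] using hbound x hx)
      (convex_Ici 0) hb ha
    simpa [Real.norm_eq_abs] using this
  have hS : Summable fun i : ℤ => (u i)^2 := by
    have h := (lp.memℓp u).summable (by norm_num : 0 < (2:ENNReal).toReal)
    simpa [ENNReal.toReal_ofNat, Real.rpow_natCast, Real.norm_eq_abs, sq_abs] using h
  have hS' : Summable fun i : ℤ => (u (i+1))^2 :=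
    (Equiv.addRight (1:ℤ)).summable_iff.mpr hS
  have htsum' : (∑' i : ℤ, (u (i+1))^2) = ∑' i : ℤ, (u i)^2 :=
    (Equiv.addRight (1:ℤ)).tsum_eq (fun i => (u i)^2)
  have hnorm : ‖u‖^2 = ∑' i : ℤ, (u i)^2 := by
    have h := lp.norm_rpow_eq_tsum (p := 2) (by norm_num) u
    simpa [ENNReal.toReal_ofNat, Real.rpow_natCast, Real.norm_eq_abs, sq_abs] using h
  set F : ℤ → ℝ := fun i => (u (i + 1) - u i) *
      (ξ (((|i + 1| : ℤ) : ℝ) / k) * u (i + 1) - ξ (((|i| : ℤ) : ℝ) / k) * u i) with hF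
  set G : ℤ → ℝ := fun i => -((C₀/k) * (2 * ((u i)^2 + (u (i+1))^2))) with hG
  have hGsum : Summable G := (((hS.add hS').mul_left _).mul_left _).neg
  have key : ∀ i : ℤ, G i ≤ F i ∧ |F i| ≤ 2 * ((u i)^2 + (u (i+1))^2) := by
    intro i
    have ha : (0:ℝ) ≤ ((|i + 1| : ℤ) : ℝ) / k :=
      div_nonneg (by exact_mod_cast abs_nonneg (i+1)) hk0.le
    have hb : (0:ℝ) ≤ ((|i| : ℤ) : ℝ) / k :=
      div_nonneg (by exact_mod_cast abs_nonneg i) hk0.le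
    obtain ⟨ha0, ha1⟩ := hrange _ ha
    obtain ⟨hb0, hb1⟩ := hrange _ hb
    set x := u i with hx
    set y := u (i+1) with hy
    set A := ξ (((|i + 1| : ℤ) : ℝ) / k) with hA
    set B := ξ (((|i| : ℤ) : ℝ) / k) with hB
    have hd : |A - B| ≤ C₀ / k := by
      have h1 := hlip _ _ ha hb
      have hint : |(|i + 1| - |i| : ℤ)| ≤ 1 := by
        rcases abs_sub_abs_le_abs_sub (i+1) i with h
        rcases abs_sub_abs_le_abs_sub i (i+1) with h'
        have e1 : (i + 1) - i = 1 := by ring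
        have e2 : i - (i + 1) = -1 := by ring
        rw [e1] at h; rw [e2] at h'
        simp only [abs_one, abs_neg] at h h'
        rw [abs_le]; omega
      have h2 : |((|i + 1| : ℤ) : ℝ) / k - ((|i| : ℤ) : ℝ) / k| ≤ 1 / k := by
        rw [div_sub_div_same, abs_div, abs_of_pos hk0]
        gcongr
        have : (|(|i + 1| - |i| : ℤ)| : ℝ) ≤ 1 := by exact_mod_cast hint
        push_cast at this
        push_cast; exact this
      calc |A - B| ≤ C₀ * |((|i + 1| : ℤ) : ℝ) / k - ((|i| : ℤ) : ℝ) / k| := h1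
        _ ≤ C₀ * (1 / k) := by gcongr
        _ = C₀ / k := by ring
    have habs : |(y - x) * y| ≤ 2 * (x^2 + y^2) := by
      rw [abs_mul]
      nlinarith [abs_sub y x, abs_nonneg x, abs_nonneg y, sq_abs x, sq_abs y,
        abs_nonneg (y - x), sq_nonneg (|x| - |y|), sq_nonneg (|x| + |y|)]
    constructor
    · have expand : F i = (A - B) * ((y - x) * y) + B * (y - x)^2 := by
        simp only [hF]; ring
      have h4 : |(A - B) * ((y - x) * y)| ≤ (C₀/k) * (2 * (x^2 + y^2)) := by
        rw [abs_mul]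
        exact mul_le_mul hd habs (abs_nonneg _) (div_nonneg hC0 hk0.le)
      have h3 := neg_abs_le ((A - B) * ((y - x) * y))
      have h5 : 0 ≤ B * (y - x)^2 := mul_nonneg hb0 (sq_nonneg _)
      simp only [hG]
      rw [expand]
      linarith
    · have hb1' : |F i| ≤ |y - x| * (|A| * |y| + |B| * |x|) := by
        simp only [hF]
        rw [abs_mul]
        gcongr
        exact (abs_sub _ _).trans (by rw [abs_mul, abs_mul])
      have hA' : |A| ≤ 1 := abs_le.mpr ⟨by linarith, ha1⟩
      have hB' : |B| ≤ 1 := abs_le.mpr ⟨by linarith, hb1⟩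
      have hxy : |y - x| ≤ |y| + |x| := abs_sub y x
      have h6 : |A| * |y| + |B| * |x| ≤ |y| + |x| := by
        have := abs_nonneg x; have := abs_nonneg y
        nlinarith
      calc |F i| ≤ |y - x| * (|A| * |y| + |B| * |x|) := hb1'
        _ ≤ (|y| + |x|) * (|y| + |x|) := by
            apply mul_le_mul hxy h6 (by positivity) (by positivity)
        _ ≤ 2 * (x^2 + y^2) := by nlinarith [sq_abs x, sq_abs y, sq_nonneg (|x| - |y|)]
  have hFsum : Summable F := by
    apply Summable.of_abs
    exact Summable.of_nonneg_of_le (fun i => abs_nonneg _) (fun i => (key i).2)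
      ((hS.add hS').mul_left 2)
  have hle : ∑' i, G i ≤ ∑' i, F i := Summable.tsum_le_tsum (fun i => (key i).1) hGsum hFsum
  have hGval : ∑' i, G i = -(4 * C₀ * ‖u‖ ^ 2) / k := by
    simp only [hG]
    rw [tsum_neg, tsum_mul_left, tsum_mul_left, Summable.tsum_add hS hS', htsum', hnorm]
    rw [neg_div, neg_inj]
    field_simp
    ring
  calc ∑' i, F i ≥ ∑' i, G i := hle
    _ = -(4 * C₀ * ‖u‖ ^ 2) / k := hGval
end

section
/- Let φ : ℝ≥0 × ℓ² × Y → ℓ² be a cocycle over a dynamical system (Y, ℝ, σ) with Y compact, i.e., φ(0, u, y) = u and φ(t+τ, u, y) = φ(t, φ(τ, u, y), σ(τ, y)). Suppose B[0, R] ⊂ ℓ² is an absorbing ball: for every bounded B ⊂ ℓ² there exists L(B) ≥ 0 with φ(t, u, y) ∈ B[0, R] for all t ≥ L(B), u ∈ B, y ∈ Y. If, moreover, for every ε > 0 there exist k(ε) ∈ ℕ and L(ε) ≥ 0 with Σ_{|i| ≥ k(ε)} |φᵢ(t, v, y)|² < ε for all t ≥ L(ε), v ∈ B[0, R], y ∈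 Y (asymptotic tails property), then for any bounded sequences u_n in ℓ², y_n in Y, and any t_n → ∞, the sequence φ(t_n, u_n, y_n) has a convergent subsequence in ℓ². -/
open Filter
open scoped ENNReal Topology

private lemma rpow_two_eq_sq' (x : ℝ) : ‖x‖ ^ (2:ℝ≥0∞).toReal = x ^ 2 := by
  rw [ENNReal.toReal_ofNat, show ((2:ℝ)) = ((2:ℕ):ℝ) by norm_num, Real.rpow_natCast,
    Real.norm_eq_abs, sq_abs]

private lemma summable_sq' (f : lp (fun _ : ℤ => ℝ) 2) : Summable (fun i : ℤ => (f i)^2) :=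
  ((lp.memℓp f).summable (by norm_num)).congr fun i => rpow_two_eq_sq' _

private lemma sum_le_tsum_subtype' (f : ℤ → ℝ) (p : ℤ → Prop) [DecidablePred p] (T : Finset ℤ)
    (hT : ∀ i ∈ T, p i) (hnn : ∀ i, 0 ≤ f i) (hs : Summable (fun i : {i // p i} => f i)) :
    ∑ i ∈ T, f i ≤ ∑' i : {i // p i}, f i := by
  have h1 : ∑ i ∈ T.subtype p, f i = ∑ i ∈ T.filter p, f i :=
    Finset.sum_subtype_eq_sum_filter f
  rw [Finset.filter_true_of_mem hT] at h1
  rw [← h1]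
  exact Summable.sum_le_tsum _ (fun i _ => hnn i) hs

/-- Asymptotic compactness of a cocycle on ℓ²(ℤ, ℝ): an absorbing ball together with
the asymptotic tails property yields precompactness of φ(t_n, u_n, y_n) for bounded
data and t_n → ∞. -/
theorem cocycle_asymptotic_compactness
    {Y : Type*} [MetricSpace Y] [CompactSpace Y]
    (σ : ℝ → Y → Y)
    (φ : ℝ → lp (fun _ : ℤ => ℝ) 2 → Y → lp (fun _ : ℤ => ℝ) 2)
    (hcocycle0 : ∀ (u : lp (fun _ : ℤ => ℝ) 2) (y : Y), φ 0 u y = u)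
    (hcocycle : ∀ t ≥ (0 : ℝ), ∀ τ ≥ (0 : ℝ), ∀ (u : lp (fun _ : ℤ => ℝ) 2) (y : Y),
      φ (t + τ) u y = φ t (φ τ u y) (σ τ y))
    (R : ℝ)
    (habsorb : ∀ B : Set (lp (fun _ : ℤ => ℝ) 2), Bornology.IsBounded B →
      ∃ L ≥ (0 : ℝ), ∀ t ≥ L, ∀ u ∈ B, ∀ y : Y, ‖φ t u y‖ ≤ R)
    (htails : ∀ ε > (0 : ℝ), ∃ (k : ℕ) (L : ℝ), 0 ≤ L ∧ ∀ t ≥ L,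
      ∀ v : lp (fun _ : ℤ => ℝ) 2, ‖v‖ ≤ R → ∀ y : Y,
        ∑' i : {i : ℤ // (k : ℤ) ≤ |i|}, (φ t v y (i : ℤ)) ^ 2 < ε) :
    ∀ (u : ℕ → lp (fun _ : ℤ => ℝ) 2), Bornology.IsBounded (Set.range u) →
    ∀ (y : ℕ → Y) (tn : ℕ → ℝ), (∀ n, 0 ≤ tn n) → Tendsto tn atTop atTop →
      ∃ (w : lp (fun _ : ℤ => ℝ) 2) (s : ℕ → ℕ), StrictMono s ∧
        Tendsto (fun n => φ (tn (s n)) (u (s n)) (y (s n))) atTop (nhds w) := by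
  classical
  intro u hu y tn htn0 htn
  obtain ⟨L₁, hL₁0, h₁⟩ := habsorb (Set.range u) hu
  obtain ⟨N₀, hN₀⟩ := eventually_atTop.1 (htn.eventually_ge_atTop L₁)
  set v : ℕ → lp (fun _ : ℤ => ℝ) 2 := fun n => φ (tn n) (u n) (y n) with hv
  set V : ℕ → lp (fun _ : ℤ => ℝ) 2 := fun n => v (n + N₀) with hVdef
  have hVR : ∀ n, ‖V n‖ ≤ R := fun n =>
    h₁ (tn (n + N₀)) (hN₀ _ (Nat.le_add_left _ _)) (u (n + N₀)) ⟨_, rfl⟩ (y (n + N₀))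
  have hR0 : 0 ≤ R := le_trans (norm_nonneg _) (hVR 0)
  set X : ℕ → (ℤ → ℝ) := fun n => ⇑(V n) with hX
  have hcoord : ∀ n, X n ∈ Set.pi Set.univ (fun _ : ℤ => Set.Icc (-R) R) := by
    intro n i _
    have h2 := (lp.norm_apply_le_norm (by norm_num : (2:ℝ≥0∞) ≠ 0) (V n) i).trans (hVR n)
    rw [Real.norm_eq_abs] at h2
    exact Set.mem_Icc.2 (abs_le.1 h2)
  obtain ⟨g, -, s, hs, hconv⟩ :=
    (isCompact_univ_pi fun _ : ℤ => isCompact_Icc).tendsto_subseq hcoord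
  have hg : ∀ i : ℤ, Tendsto (fun n => V (s n) i) atTop (𝓝 (g i)) := fun i =>
    tendsto_pi_nhds.1 hconv i
  have hbnd : Bornology.IsBounded (Set.range fun n => V (s n)) := by
    refine isBounded_iff_forall_norm_le.2 ⟨R, ?_⟩
    rintro x ⟨n, rfl⟩; exact hVR _
  have hmem : Memℓp g 2 := lp.memℓp_of_tendsto hbnd hconv
  set w : lp (fun _ : ℤ => ℝ) 2 := ⟨g, hmem⟩ with hwdef
  have hwcoe : ∀ i : ℤ, w i = g i := fun _ => rfl
  -- key eventual estimate
  have key : ∀ ε > (0:ℝ), ∀ᶠ n in atTop, ‖V (s n) - w‖ ≤ ε := by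
    intro ε hε
    set δ := ε ^ 2 / 8 with hδdef
    have hδ0 : 0 < δ := by positivity
    obtain ⟨k, L, hL0, hL⟩ := htails δ hδ0
    have hsm : StrictMono (fun n => s n + N₀) := fun a b h => by simpa using hs h
    have hts : Tendsto (fun n => tn (s n + N₀)) atTop atTop := htn.comp hsm.tendsto_atTop
    have hT : ∀ᶠ n in atTop,
        ∑' i : {i : ℤ // (k : ℤ) ≤ |i|}, (V (s n) (i : ℤ)) ^ 2 < δ := by
      filter_upwards [hts.eventually_ge_atTop (L + L₁)] with n hn
      set m := s n + N₀ with hm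
      have h0 : tn m - L₁ ≥ L := by linarith
      have h0' : (0:ℝ) ≤ tn m - L₁ := by linarith
      have hcoc := hcocycle (tn m - L₁) h0' L₁ hL₁0 (u m) (y m)
      rw [sub_add_cancel] at hcoc
      have hRm : ‖φ L₁ (u m) (y m)‖ ≤ R := h₁ L₁ le_rfl (u m) ⟨m, rfl⟩ (y m)
      have htail := hL (tn m - L₁) h0 _ hRm (σ L₁ (y m))
      have hVeq : V (s n) = φ (tn m - L₁) (φ L₁ (u m) (y m)) (σ L₁ (y m)) := by
        rw [hVdef]; exact hcoc
      rw [hVeq]; exact htail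
    have hsumW : Summable (fun i : {i : ℤ // (k : ℤ) ≤ |i|} => (w (i : ℤ)) ^ 2) :=
      (summable_sq' w).subtype _
    have hwT : ∑' i : {i : ℤ // (k : ℤ) ≤ |i|}, (w (i : ℤ)) ^ 2 ≤ δ := by
      refine Summable.tsum_le_of_sum_le hsumW fun S => ?_
      have hlim : Tendsto (fun n => ∑ i ∈ S, (V (s n) (i : ℤ)) ^ 2) atTop
          (𝓝 (∑ i ∈ S, (w (i : ℤ)) ^ 2)) := by
        refine tendsto_finset_sum _ fun i _ => ?_
        exact (hg i).pow 2
      refine le_of_tendsto hlim ?_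
      filter_upwards [hT] with n hn
      exact le_of_lt (lt_of_le_of_lt
        (Summable.sum_le_tsum S (fun i _ => sq_nonneg _) ((summable_sq' (V (s n))).subtype _)) hn)
    set B : Finset ℤ := Finset.Ioo (-(k : ℤ)) (k : ℤ) with hBdef
    have hfin : Tendsto (fun n => ∑ i ∈ B, (V (s n) i - w i) ^ 2) atTop (𝓝 0) := by
      have h0 : (0:ℝ) = ∑ i ∈ B, (0:ℝ) := by simp
      rw [h0]
      refine tendsto_finset_sum _ fun i _ => ?_
      have := ((hg i).sub (tendsto_const_nhds (x := w i))).pow 2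
      simpa [hwcoe] using this
    have hfin' : ∀ᶠ n in atTop, ∑ i ∈ B, (V (s n) i - w i) ^ 2 < 4 * δ :=
      hfin.eventually_lt_const (by positivity)
    filter_upwards [hT, hfin'] with n hn1 hn2
    have h2p : (0:ℝ) < (2:ℝ≥0∞).toReal := by norm_num
    refine lp.norm_le_of_forall_sum_le h2p hε.le fun S => ?_
    have hεrw : (ε:ℝ) ^ (2:ℝ≥0∞).toReal = ε ^ 2 := by
      rw [ENNReal.toReal_ofNat, show ((2:ℝ)) = ((2:ℕ):ℝ) by norm_num, Real.rpow_natCast]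
    rw [hεrw]
    have hSB : ∀ i ∈ S \ B, (k : ℤ) ≤ |i| := by
      intro i hi
      have := (Finset.mem_sdiff.1 hi).2
      simp only [hBdef, Finset.mem_Ioo, not_and_or, not_lt] at this
      rcases this with h | h
      · rw [abs_of_nonpos (by linarith)]; linarith
      · rw [abs_of_nonneg (by linarith)]; linarith
    have hVtail : ∑ i ∈ S \ B, (V (s n) i) ^ 2 ≤ δ :=
      le_of_lt (lt_of_le_of_lt (sum_le_tsum_subtype' _ _ _ hSB (fun i => sq_nonneg _)
        ((summable_sq' (V (s n))).subtype _)) hn1)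
    have hWtail : ∑ i ∈ S \ B, (w i) ^ 2 ≤ δ :=
      le_trans (sum_le_tsum_subtype' _ _ _ hSB (fun i => sq_nonneg _) hsumW) hwT
    calc ∑ i ∈ S, ‖(V (s n) - w) i‖ ^ (2:ℝ≥0∞).toReal
        = ∑ i ∈ S, (V (s n) i - w i) ^ 2 := by
          refine Finset.sum_congr rfl fun i _ => ?_
          rw [rpow_two_eq_sq', lp.coeFn_sub, Pi.sub_apply]
      _ = ∑ i ∈ S ∩ B, (V (s n) i - w i) ^ 2 + ∑ i ∈ S \ B, (V (s n) i - w i) ^ 2 :=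
          (Finset.sum_inter_add_sum_sdiff S B _).symm
      _ ≤ (4 * δ) + (2 * δ + 2 * δ) := by
          gcongr ?_ + ?_
          · refine le_trans (Finset.sum_le_sum_of_subset_of_nonneg
              Finset.inter_subset_right (fun i _ _ => sq_nonneg _)) hn2.le
          · calc ∑ i ∈ S \ B, (V (s n) i - w i) ^ 2
                ≤ ∑ i ∈ S \ B, (2 * (V (s n) i) ^ 2 + 2 * (w i) ^ 2) := by
                  refine Finset.sum_le_sum fun i _ => ?_
                  nlinarith [sq_nonneg (V (s n) i + w i)]
              _ = 2 * ∑ i ∈ S \ B, (V (s n) i) ^ 2 + 2 * ∑ i ∈ S \ B, (w i) ^ 2 := by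
                  rw [Finset.sum_add_distrib, Finset.mul_sum, Finset.mul_sum]
              _ ≤ 2 * δ + 2 * δ := by gcongr
      _ = ε ^ 2 := by rw [hδdef]; ring
  refine ⟨w, fun n => s n + N₀, fun a b h => by simpa using hs h, ?_⟩
  have hfinal : Tendsto (fun n => V (s n)) atTop (𝓝 w) := by
    rw [Metric.tendsto_atTop]
    intro ε hε
    obtain ⟨N, hN⟩ := eventually_atTop.1 (key (ε / 2) (by positivity))
    refine ⟨N, fun n hn => ?_⟩
    have := hN n hn
    rw [dist_eq_norm]
    linarith
  exact hfinal
end
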